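/- arXiv:1905.07087 — 3 statements merged into one kernel-verified Lean document; each statement's English description precedes it below -/
import Mathlib

section
/- For variables $z_1,\dots,z_n$ and a parameter $t$, the symmetrization $\mathrm{Sym}\left[\prod_{1\le i<j\le n}\frac{z_i-z_j}{z_i-tz_j}\right] = \frac{1}{n!}\sum_{\sigma\in\mathfrak{S}_n}\prod_{1\le i<j\le n}\frac{z_{\sigma(i)}-z_{\sigma(j)}}{z_{\sigma(i)}-tz_{\sigma(j)}}$ equals $\frac{[n]_t!}{n!}\prod_{1\le i<j\le n}\frac{(z_i-z_j)(z_j-z_i)}{(z_i-tz_j)(z_j-tz_i)}$, where $[n]_t! = \prod_{k=1}^n \frac{1-t^k}{1-t}$. -/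
open Polynomial Finset

lemma leadingCoeff_basisDivisor {K : Type*} [Field K] (a b : K) :
    (Lagrange.basisDivisor a b).leadingCoeff = (a - b)⁻¹ := by
  rw [Lagrange.basisDivisor, leadingCoeff_mul, leadingCoeff_C, (monic_X_sub_C b).leadingCoeff,
    mul_one]

lemma coeff_basis {K : Type*} [Field K] {n : ℕ} (v : Fin n → K) (hv : Function.Injective v)
    (i : Fin n) :
    (Lagrange.basis univ v i).coeff (n - 1) = (∏ j ∈ univ.erase i, (v i - v j))⁻¹ := by
  have hnd : (Lagrange.basis univ v i).natDegree = n - 1 := by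
    rw [Lagrange.natDegree_basis (hv.injOn) (mem_univ i), card_univ, Fintype.card_fin]
  have : (Lagrange.basis univ v i).coeff (n-1) = (Lagrange.basis univ v i).leadingCoeff := by
    rw [Polynomial.leadingCoeff, hnd]
  rw [this, Lagrange.basis, leadingCoeff_prod]
  rw [← prod_inv_distrib]
  exact prod_congr rfl fun j _ => leadingCoeff_basisDivisor _ _

lemma lagrange_coeff_sum {K : Type*} [Field K] {n : ℕ} (v : Fin n → K)
    (hv : Function.Injective v) (f : K[X]) (hf : f.degree < (n : WithBot ℕ)) :
    ∑ i : Fin n, f.eval (v i) / ∏ j ∈ univ.erase i, (v i - v j) = f.coeff (n - 1) := by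
  have hcard : (#(univ : Finset (Fin n)) : WithBot ℕ) = (n : WithBot ℕ) := by
    rw [card_univ, Fintype.card_fin]
  have hf' : f.degree < #(univ : Finset (Fin n)) := by rw [hcard]; exact hf
  conv_rhs => rw [Lagrange.eq_interpolate hv.injOn hf']
  rw [Lagrange.interpolate_apply, finset_sum_coeff]
  refine sum_congr rfl fun i _ => ?_
  rw [coeff_C_mul, coeff_basis v hv i, div_eq_mul_inv]


lemma prod_neg_eq {K : Type*} [CommRing K] {ι : Type*} (s : Finset ι) (g : ι → K) :
    ∏ i ∈ s, (-g i) = (-1) ^ s.card * ∏ i ∈ s, g i := by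
  have : ∀ i ∈ s, -g i = (-1) * g i := fun i _ => by ring
  rw [prod_congr rfl this, prod_mul_distrib, prod_const]

lemma key_sum {K : Type*} [Field K] {m : ℕ} (t : K) (x : Fin (m+1) → K)
    (hx : Function.Injective x) :
    (1 - t) * ∑ p : Fin (m+1),
        (∏ q ∈ univ.erase p, (x q - t * x p)) / (∏ q ∈ univ.erase p, (x q - x p))
      = 1 - t ^ (m+1) := by
  classical
  set U : K[X] := ∏ q : Fin (m+1), (C (x q) - C t * X) with hU
  set Q : K[X] := ∏ q : Fin (m+1), (X - C (x q)) with hQ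
  set D : K[X] := U - C ((-1)^(m+1)) * Q with hD
  have hcard : ∀ p : Fin (m+1), (univ.erase p).card = m := by
    intro p; rw [card_erase_of_mem (mem_univ p), card_univ, Fintype.card_fin]; omega
  have hD0 : D.coeff 0 = 0 := by
    have hU0 : U.eval 0 = ∏ q, x q := by
      simp [hU, eval_prod]
    have hQ0 : Q.eval 0 = (-1)^(m+1) * ∏ q, x q := by
      simp only [hQ, eval_prod, eval_sub, eval_X, eval_C, zero_sub]
      rw [prod_neg_eq, card_univ, Fintype.card_fin]
    rw [coeff_zero_eq_eval_zero, hD, eval_sub, eval_mul, eval_C, hU0, hQ0]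
    rw [← mul_assoc, ← pow_add]
    have : (-1:K)^((m+1)+(m+1)) = 1 := by
      rw [← two_mul, pow_mul]; norm_num
    rw [this, one_mul, sub_self]
  obtain ⟨W, hW⟩ : X ∣ D := X_dvd_iff.mpr hD0
  have hUdeg : U.natDegree ≤ (m+1) := by
    refine le_trans (natDegree_prod_le _ _) ?_
    calc ∑ q : Fin (m+1), (C (x q) - C t * X).natDegree ≤ ∑ _q : Fin (m+1), 1 := by
          refine sum_le_sum fun q _ => ?_
          refine le_trans (natDegree_sub_le _ _) (max_le (by simp) ?_)
          exact le_trans (natDegree_mul_le) (by simp)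
      _ = (m+1) := by simp
  have hQdeg : Q.natDegree = (m+1) := by
    rw [hQ, natDegree_prod _ _ (fun q _ => X_sub_C_ne_zero (x q))]
    simp
  have hDdeg : D.natDegree ≤ (m+1) := by
    refine le_trans (natDegree_sub_le _ _) (max_le hUdeg ?_)
    exact le_trans (natDegree_mul_le) (by simp [hQdeg])
  have hWdeg : W.degree < (((m+1) : ℕ) : WithBot ℕ) := by
    rw [degree_lt_iff_coeff_zero]
    intro k hk
    have h1 : W.coeff k = D.coeff (k+1) := by rw [hW, coeff_X_mul]
    rw [h1]
    refine coeff_eq_zero_of_natDegree_lt (lt_of_le_of_lt hDdeg ?_)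
    omega
  -- top coefficient of W
  have hUn : U.coeff (m+1) = (-t)^(m+1) := by
    have h1 : ∀ q : Fin (m+1), (C (x q) - C t * X).natDegree ≤ 1 := by
      intro q
      refine le_trans (natDegree_sub_le _ _) (max_le (by simp) ?_)
      exact le_trans (natDegree_mul_le) (by simp)
    have h2 := coeff_prod_of_natDegree_le (s := (univ : Finset (Fin (m+1))))
      (fun q => C (x q) - C t * X) 1 (fun q _ => h1 q)
    rw [card_univ, Fintype.card_fin, mul_one] at h2
    rw [hU, h2]
    have h3 : ∀ q : Fin (m+1), (C (x q) - C t * X).coeff 1 = -t := by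
      intro q
      simp [coeff_sub, coeff_C]
    rw [prod_congr rfl (fun q _ => h3 q), prod_const, card_univ, Fintype.card_fin]
  have hQn : Q.coeff (m+1) = 1 := by
    have hQm : Q.Monic := monic_prod_of_monic _ _ fun q _ => monic_X_sub_C (x q)
    have := hQm.coeff_natDegree
    rwa [hQdeg] at this
  have hWn : W.coeff m = (-t)^(m+1) - (-1)^(m+1) := by
    have h1 : W.coeff m = D.coeff (m+1) := by rw [hW, coeff_X_mul]
    rw [h1, hD, coeff_sub, coeff_C_mul, hUn, hQn, mul_one]
  -- evaluation of W at the nodes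
  have hWeval : ∀ p : Fin (m+1), W.eval (x p) = (1 - t) * ∏ q ∈ univ.erase p, (x q - t * x p) := by
    intro p
    have hQev : Q.eval (x p) = 0 := by
      rw [hQ, eval_prod]
      exact prod_eq_zero (mem_univ p) (by simp)
    have hUev : U.eval (x p) = (x p - t * x p) * ∏ q ∈ univ.erase p, (x q - t * x p) := by
      rw [hU, eval_prod, ← Finset.mul_prod_erase univ _ (mem_univ p)]
      simp only [eval_sub, eval_mul, eval_C, eval_X]
    have hDev : D.eval (x p) = (x p - t * x p) * ∏ q ∈ univ.erase p, (x q - t * x p) := by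
      rw [hD, eval_sub, eval_mul, eval_C, hQev, hUev, mul_zero, sub_zero]
    by_cases hxp : x p = 0
    · -- evaluate at zero via coefficient 1
      have h0 : W.eval (x p) = D.coeff 1 := by
        rw [hxp, ← coeff_zero_eq_eval_zero, hW, coeff_X_mul]
      have hUsplit : U = (C (x p) - C t * X) * ∏ q ∈ univ.erase p, (C (x q) - C t * X) :=
        (Finset.mul_prod_erase univ _ (mem_univ p)).symm
      have hQsplit : Q = (X - C (x p)) * ∏ q ∈ univ.erase p, (X - C (x q)) :=
        (Finset.mul_prod_erase univ _ (mem_univ p)).symm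
      have hU1 : U.coeff 1 = -t * ∏ q ∈ univ.erase p, x q := by
        rw [hUsplit, hxp, map_zero, zero_sub]
        have hre : -(C t * X) * (∏ q ∈ univ.erase p, (C (x q) - C t * X))
            = -(C t * (X * ∏ q ∈ univ.erase p, (C (x q) - C t * X))) := by ring
        rw [hre, coeff_neg, coeff_C_mul, coeff_X_mul, coeff_zero_eq_eval_zero, eval_prod]
        simp only [eval_sub, eval_mul, eval_C, eval_X, mul_zero, sub_zero, neg_mul]
      have hQ1 : Q.coeff 1 = (-1)^m * ∏ q ∈ univ.erase p, x q := by
        rw [hQsplit, hxp, map_zero, sub_zero, coeff_X_mul, coeff_zero_eq_eval_zero, eval_prod]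
        simp only [eval_sub, eval_X, eval_C, zero_sub]
        rw [prod_neg_eq, hcard p]
      have hsign : (-1:K)^(m+1) * (-1:K)^m = -1 := by
        rw [← pow_add]
        have h2m : m + 1 + m = 2*m + 1 := by ring
        rw [h2m, pow_succ, pow_mul]; norm_num
      have hrhs : ∏ q ∈ univ.erase p, (x q - t * x p) = ∏ q ∈ univ.erase p, x q := by
        refine prod_congr rfl fun q _ => ?_
        rw [hxp, mul_zero, sub_zero]
      rw [h0, hD, coeff_sub, coeff_C_mul, hU1, hQ1, hrhs]
      linear_combination (-(∏ q ∈ univ.erase p, x q)) * hsign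
    · have h1 : x p * W.eval (x p) = x p * ((1 - t) * ∏ q ∈ univ.erase p, (x q - t * x p)) := by
        have := hDev
        rw [hW, eval_mul, eval_X] at this
        rw [this]; ring
      exact mul_left_cancel₀ hxp h1
  -- assemble via Lagrange interpolation
  have hL := lagrange_coeff_sum x hx W hWdeg
  have hnm : (m+1) - 1 = m := by omega
  rw [hnm] at hL
  have hterm : ∀ p : Fin (m+1),
      (1-t) * ((∏ q ∈ univ.erase p, (x q - t * x p)) / (∏ q ∈ univ.erase p, (x q - x p)))
      = (-1)^m * (W.eval (x p) / ∏ q ∈ univ.erase p, (x p - x q)) := by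
    intro p
    have hB : (∏ q ∈ univ.erase p, (x p - x q)) ≠ 0 := by
      refine prod_ne_zero_iff.mpr fun q hq => ?_
      exact sub_ne_zero_of_ne fun h => (mem_erase.mp hq).1 (hx h.symm)
    have hflip : ∏ q ∈ univ.erase p, (x q - x p)
        = (-1)^m * ∏ q ∈ univ.erase p, (x p - x q) := by
      have hc : ∀ q ∈ univ.erase p, x q - x p = -(x p - x q) := fun q _ => by ring
      rw [prod_congr rfl hc, prod_neg_eq, hcard p]
    have hinv : ((-1:K)^m)⁻¹ = (-1:K)^m := by
      rw [← inv_pow, inv_neg, inv_one]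
    rw [hWeval p, hflip, mul_comm ((-1:K)^m) (∏ q ∈ univ.erase p, (x p - x q)), ← div_div,
      div_eq_mul_inv _ ((-1:K)^m), hinv]
    ring
  rw [mul_sum]
  rw [sum_congr rfl (fun p _ => hterm p), ← mul_sum, hL, hWn]
  have hsign : (-1:K)^m * (-1:K)^(m+1) = -1 := by
    rw [← pow_add]
    have h2m : m + (m + 1) = 2*m + 1 := by ring
    rw [h2m, pow_succ, pow_mul]; norm_num
  rw [neg_pow t (m+1)]
  linear_combination (t^(m+1) - 1) * hsign


section helpers
variable {M : Type*} [CommMonoid M]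

lemma Ioi_filter {n : ℕ} (i : Fin n) : univ.filter (fun j => i < j) = Ioi i := by
  ext j; simp

lemma pair_prod_eq {n : ℕ} (F : Fin n → Fin n → M) :
    ∏ p ∈ univ.filter (fun p : Fin n × Fin n => p.1 < p.2), F p.1 p.2
      = ∏ i : Fin n, ∏ j ∈ Ioi i, F i j := by
  rw [prod_filter, Fintype.prod_prod_type]
  refine prod_congr rfl fun i _ => ?_
  rw [← Ioi_filter i, prod_filter]

lemma pair_prod_succ {n : ℕ} (F : Fin (n+1) → Fin (n+1) → M) :
    (∏ i : Fin (n+1), ∏ j ∈ Ioi i, F i j)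
      = (∏ j : Fin n, F 0 j.succ) * ∏ i : Fin n, ∏ j ∈ Ioi i, F i.succ j.succ := by
  rw [Fin.prod_univ_succ]
  congr 1
  · exact Fin.prod_Ioi_zero _
  · exact prod_congr rfl fun i _ => Fin.prod_Ioi_succ _ i

lemma prod_pairs_perm {n : ℕ} (σ : Equiv.Perm (Fin n)) (H : Fin n → Fin n → M)
    (hs : ∀ a b, H a b = H b a) :
    ∏ p ∈ univ.filter (fun p : Fin n × Fin n => p.1 < p.2), H (σ p.1) (σ p.2)
      = ∏ p ∈ univ.filter (fun p : Fin n × Fin n => p.1 < p.2), H p.1 p.2 := by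
  refine prod_nbij'
    (fun p => if σ p.1 < σ p.2 then (σ p.1, σ p.2) else (σ p.2, σ p.1))
    (fun p => if σ⁻¹ p.1 < σ⁻¹ p.2 then (σ⁻¹ p.1, σ⁻¹ p.2) else (σ⁻¹ p.2, σ⁻¹ p.1))
    ?_ ?_ ?_ ?_ ?_
  · intro p hp
    simp only [mem_filter, mem_univ, true_and] at hp ⊢
    by_cases h : σ p.1 < σ p.2
    · simpa [h]
    · have hne : σ p.1 ≠ σ p.2 := fun he => absurd (σ.injective he) (ne_of_lt hp)
      have := lt_of_le_of_ne (not_lt.mp h) hne.symm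
      simpa [h]
  · intro p hp
    simp only [mem_filter, mem_univ, true_and] at hp ⊢
    by_cases h : σ⁻¹ p.1 < σ⁻¹ p.2
    · simp only [Equiv.Perm.coe_inv] at h; simpa [h]
    · have hne : σ⁻¹ p.1 ≠ σ⁻¹ p.2 := fun he => absurd (σ⁻¹.injective he) (ne_of_lt hp)
      have := lt_of_le_of_ne (not_lt.mp h) hne.symm
      simp only [Equiv.Perm.coe_inv] at h; simpa [h]
  · intro p hp
    simp only [mem_filter, mem_univ, true_and] at hp
    by_cases h : σ p.1 < σ p.2
    · simp [h, hp]
    · have hne : σ p.1 ≠ σ p.2 := fun he => absurd (σ.injective he) (ne_of_lt hp)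
      have h2 := lt_of_le_of_ne (not_lt.mp h) hne.symm
      simp [h, not_lt.mpr (le_of_lt h2), hp, not_lt.mpr (le_of_lt hp)]
  · intro p hp
    simp only [mem_filter, mem_univ, true_and] at hp
    by_cases h : σ⁻¹ p.1 < σ⁻¹ p.2
    · simp only [Equiv.Perm.coe_inv] at h; simp [h, hp]
    · have hne : σ⁻¹ p.1 ≠ σ⁻¹ p.2 := fun he => absurd (σ⁻¹.injective he) (ne_of_lt hp)
      have h2 := lt_of_le_of_ne (not_lt.mp h) hne.symm
      simp only [Equiv.Perm.coe_inv] at h h2; simp [h, not_lt.mpr (le_of_lt h2), hp, not_lt.mpr (le_of_lt hp)]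
  · intro p hp
    by_cases h : σ p.1 < σ p.2
    · simp [h]
    · simp [h, hs (σ p.2) (σ p.1)]

end helpers

lemma key_sum' {K : Type*} [Field K] {m : ℕ} (t : K) (ht : t ≠ 1) (x : Fin (m+1) → K)
    (hx : Function.Injective x) :
    ∑ p : Fin (m+1), ∏ q ∈ univ.erase p, ((x q - t * x p) / (x q - x p))
      = (1 - t ^ (m+1)) / (1 - t) := by
  have h := key_sum t x hx
  have h1t : (1:K) - t ≠ 0 := sub_ne_zero_of_ne fun he => ht he.symm
  rw [sum_congr rfl (fun p _ => prod_div_distrib _ _), eq_div_iff h1t]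
  linear_combination h

lemma perm_sum {K : Type*} [Field K] (t : K) (ht : t ≠ 1) :
    ∀ (n : ℕ) (y : Fin n → K), Function.Injective y →
    ∑ σ : Equiv.Perm (Fin n), ∏ i : Fin n, ∏ j ∈ Ioi i,
        ((y (σ j) - t * y (σ i)) / (y (σ j) - y (σ i)))
      = ∏ k ∈ range n, (1 - t^(k+1)) / (1 - t)
  | 0, y, hy => by simp
  | (n+1), y, hy => by
    rw [← Equiv.sum_comp (Equiv.Perm.decomposeFin (n := n)).symm, Fintype.sum_prod_type]
    have hterm : ∀ (p : Fin (n+1)) (τ : Equiv.Perm (Fin n)),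
        (∏ i : Fin (n+1), ∏ j ∈ Ioi i,
          ((y ((Equiv.Perm.decomposeFin.symm (p, τ)) j)
              - t * y ((Equiv.Perm.decomposeFin.symm (p, τ)) i))
            / (y ((Equiv.Perm.decomposeFin.symm (p, τ)) j)
              - y ((Equiv.Perm.decomposeFin.symm (p, τ)) i))))
        = (∏ q ∈ univ.erase p, ((y q - t * y p) / (y q - y p)))
          * ∏ i : Fin n, ∏ j ∈ Ioi i,
              ((y (Equiv.swap 0 p ((τ j).succ)) - t * y (Equiv.swap 0 p ((τ i).succ)))
                / (y (Equiv.swap 0 p ((τ j).succ)) - y (Equiv.swap 0 p ((τ i).succ)))) := by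
      intro p τ
      set σ : Equiv.Perm (Fin (n+1)) := Equiv.Perm.decomposeFin.symm (p, τ) with hσ
      rw [pair_prod_succ (fun a b => (y (σ b) - t * y (σ a)) / (y (σ b) - y (σ a)))]
      congr 1
      · -- first factor: product over image of succ = erase p
        have h0 : σ 0 = p := Equiv.Perm.decomposeFin_symm_apply_zero p τ
        have hne0 : ∀ j : Fin n, σ j.succ ≠ p := by
          intro j he
          rw [← h0] at he
          exact Fin.succ_ne_zero j (σ.injective he)
        calc (∏ j : Fin n, ((y (σ j.succ) - t * y (σ 0)) / (y (σ j.succ) - y (σ 0))))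
            = ∏ j : Fin n, ((y (σ j.succ) - t * y p) / (y (σ j.succ) - y p)) := by
              rw [h0]
          _ = ∏ q ∈ univ.erase p, ((y q - t * y p) / (y q - y p)) := by
              refine prod_bij (fun j _ => σ j.succ) ?_ ?_ ?_ ?_
              · intro j _
                exact mem_erase.mpr ⟨hne0 j, mem_univ _⟩
              · intro a _ b _ he
                exact Fin.succ_injective n (σ.injective he)
              · intro q hq
                have hq' : σ⁻¹ q ≠ 0 := by
                  intro he
                  have : q = σ 0 := by rw [← he]; simp
                  exact (mem_erase.mp hq).1 (by rw [this, h0])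
                obtain ⟨j, hj⟩ := Fin.eq_succ_of_ne_zero hq'
                refine ⟨j, mem_univ j, ?_⟩
                show σ j.succ = q
                rw [← hj]; simp
              · intro j _
                rfl
      · refine prod_congr rfl fun i _ => prod_congr rfl fun j _ => ?_
        rw [hσ, Equiv.Perm.decomposeFin_symm_apply_succ, Equiv.Perm.decomposeFin_symm_apply_succ]
    have hstep : ∀ p : Fin (n+1),
        (∑ τ : Equiv.Perm (Fin n), ∏ i : Fin (n+1), ∏ j ∈ Ioi i,
          ((y ((Equiv.Perm.decomposeFin.symm (p, τ)) j)
              - t * y ((Equiv.Perm.decomposeFin.symm (p, τ)) i))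
            / (y ((Equiv.Perm.decomposeFin.symm (p, τ)) j)
              - y ((Equiv.Perm.decomposeFin.symm (p, τ)) i))))
        = (∏ q ∈ univ.erase p, ((y q - t * y p) / (y q - y p)))
          * ∏ k ∈ range n, (1 - t^(k+1)) / (1 - t) := by
      intro p
      have hy' : Function.Injective (fun k : Fin n => y (Equiv.swap 0 p k.succ)) := by
        intro a b he
        exact Fin.succ_injective n ((Equiv.swap 0 p).injective (hy he))
      rw [sum_congr rfl (fun τ _ => hterm p τ), ← mul_sum]
      congr 1
      exact perm_sum t ht n (fun k => y (Equiv.swap 0 p k.succ)) hy'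
    rw [sum_congr rfl (fun p _ => hstep p), ← sum_mul, prod_range_succ, key_sum' t ht y hy]
    ring

/-- symmetrization of ∏_{i<j} (z_i - z_j)/(z_i - t z_j) equals
  ([n]_t!/n!) ∏_{i<j} (z_i-z_j)(z_j-z_i)/((z_i-tz_j)(z_j-tz_i)),
  where [n]_t! = ∏_{k=1}^n (1-t^k)/(1-t). -/
theorem symmetrization_eq {K : Type*} [Field K] [CharZero K] (n : ℕ) (t : K) (ht : t ≠ 1)
    (z : Fin n → K) (hz : ∀ i j : Fin n, i ≠ j → z i - t * z j ≠ 0) :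
    (1 / (n.factorial : K)) *
      ∑ σ : Equiv.Perm (Fin n),
        ∏ p ∈ Finset.univ.filter (fun p : Fin n × Fin n => p.1 < p.2),
          (z (σ p.1) - z (σ p.2)) / (z (σ p.1) - t * z (σ p.2))
    = ((∏ k ∈ Finset.range n, (1 - t ^ (k + 1)) / (1 - t)) / (n.factorial : K)) *
      ∏ p ∈ Finset.univ.filter (fun p : Fin n × Fin n => p.1 < p.2),
        ((z p.1 - z p.2) * (z p.2 - z p.1)) /
          ((z p.1 - t * z p.2) * (z p.2 - t * z p.1)) := by
  classical
  by_cases hinj : Function.Injective z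
  · have key : ∀ σ : Equiv.Perm (Fin n),
        ∏ p ∈ Finset.univ.filter (fun p : Fin n × Fin n => p.1 < p.2),
          (z (σ p.1) - z (σ p.2)) / (z (σ p.1) - t * z (σ p.2))
        = (∏ p ∈ Finset.univ.filter (fun p : Fin n × Fin n => p.1 < p.2),
            ((z p.1 - z p.2) * (z p.2 - z p.1)) /
              ((z p.1 - t * z p.2) * (z p.2 - t * z p.1)))
          * ∏ i : Fin n, ∏ j ∈ Finset.Ioi i,
              ((z (σ j) - t * z (σ i)) / (z (σ j) - z (σ i))) := by
      intro σ
      have h1 : ∀ p ∈ Finset.univ.filter (fun p : Fin n × Fin n => p.1 < p.2),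
          (z (σ p.1) - z (σ p.2)) / (z (σ p.1) - t * z (σ p.2))
          = (((z (σ p.1) - z (σ p.2)) * (z (σ p.2) - z (σ p.1)))
              / ((z (σ p.1) - t * z (σ p.2)) * (z (σ p.2) - t * z (σ p.1))))
            * ((z (σ p.2) - t * z (σ p.1)) / (z (σ p.2) - z (σ p.1))) := by
        intro p hp
        have hpne : σ p.1 ≠ σ p.2 :=
          fun he => (ne_of_lt (mem_filter.mp hp).2) (σ.injective he)
        have d1 : z (σ p.1) - t * z (σ p.2) ≠ 0 := hz _ _ hpne
        have d2 : z (σ p.2) - t * z (σ p.1) ≠ 0 := hz _ _ hpne.symm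
        have d3 : z (σ p.2) - z (σ p.1) ≠ 0 :=
          sub_ne_zero_of_ne fun he => hpne (hinj he).symm
        rw [div_mul_div_comm, div_eq_div_iff d1 (mul_ne_zero (mul_ne_zero d1 d2) d3)]
        ring
      rw [prod_congr rfl h1, prod_mul_distrib]
      congr 1
      · exact prod_pairs_perm σ
          (fun a b => ((z a - z b) * (z b - z a)) / ((z a - t * z b) * (z b - t * z a)))
          (fun a b => by ring)
      · exact pair_prod_eq (fun i j => (z (σ j) - t * z (σ i)) / (z (σ j) - z (σ i)))
    rw [sum_congr rfl (fun σ _ => key σ), ← mul_sum, perm_sum t ht n z hinj]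
    ring
  · obtain ⟨a, b, hab, hne⟩ : ∃ a b, z a = z b ∧ a ≠ b := by
      rw [Function.Injective] at hinj
      push_neg at hinj
      exact hinj
    have hLHS : (∑ σ : Equiv.Perm (Fin n),
        ∏ p ∈ Finset.univ.filter (fun p : Fin n × Fin n => p.1 < p.2),
          (z (σ p.1) - z (σ p.2)) / (z (σ p.1) - t * z (σ p.2))) = 0 := by
      refine sum_eq_zero fun σ _ => ?_
      have hne' : σ⁻¹ a ≠ σ⁻¹ b := fun he => hne (by simpa using congrArg σ he)
      rcases lt_or_gt_of_ne hne' with h | h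
      · refine prod_eq_zero (mem_filter.mpr ⟨mem_univ (σ⁻¹ a, σ⁻¹ b), h⟩) ?_
        show (z (σ (σ⁻¹ a)) - z (σ (σ⁻¹ b))) / _ = 0
        rw [Equiv.Perm.coe_inv, Equiv.apply_symm_apply, Equiv.apply_symm_apply, hab, sub_self, zero_div]
      · refine prod_eq_zero (mem_filter.mpr ⟨mem_univ (σ⁻¹ b, σ⁻¹ a), h⟩) ?_
        show (z (σ (σ⁻¹ b)) - z (σ (σ⁻¹ a))) / _ = 0
        rw [Equiv.Perm.coe_inv, Equiv.apply_symm_apply, Equiv.apply_symm_apply, hab, sub_self, zero_div]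
    have hRHS : (∏ p ∈ Finset.univ.filter (fun p : Fin n × Fin n => p.1 < p.2),
        ((z p.1 - z p.2) * (z p.2 - z p.1)) /
          ((z p.1 - t * z p.2) * (z p.2 - t * z p.1))) = 0 := by
      rcases lt_or_gt_of_ne hne with h | h
      · refine prod_eq_zero (mem_filter.mpr ⟨mem_univ (a, b), h⟩) ?_
        show ((z a - z b) * _) / _ = 0
        rw [hab, sub_self, zero_mul, zero_div]
      · refine prod_eq_zero (mem_filter.mpr ⟨mem_univ (b, a), h⟩) ?_
        show ((z b - z a) * _) / _ = 0
        rw [hab, sub_self, zero_mul, zero_div]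
    rw [hLHS, hRHS, mul_zero, mul_zero]
end

section
/- For variables $z_1,\dots,z_n$ and parameter $t$, the Hall–Littlewood identity for the empty partition holds: $\sum_{\sigma\in\mathfrak{S}_n}\sigma\left(\prod_{1\le i<j\le n}\frac{z_i-tz_j}{z_i-z_j}\right) = [n]_t!$, where $[n]_t! = \prod_{k=1}^n\frac{1-t^k}{1-t}$. -/
open Finset Polynomial

lemma hl_prod_neg {ι F : Type*} [CommRing F] (s : Finset ι) (f : ι → F) :
    ∏ i ∈ s, (-f i) = (-1) ^ s.card * ∏ i ∈ s, f i := by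
  rw [← Finset.prod_const, ← Finset.prod_mul_distrib]
  simp

lemma hl_prod_cmul {ι F : Type*} [CommRing F] (s : Finset ι) (c : F) (f : ι → F) :
    ∏ i ∈ s, (c * f i) = c ^ s.card * ∏ i ∈ s, f i := by
  rw [← Finset.prod_const, ← Finset.prod_mul_distrib]

lemma hl_key {F : Type*} [Field F] {M : ℕ} (t : F) (z : Fin (M + 1) → F)
    (hz : Function.Injective z) (hz0 : ∀ i, z i ≠ 0) :
    (1 - t) * ∑ k : Fin (M + 1), ∏ m ∈ Finset.univ.erase k, ((z k - t * z m) / (z k - z m))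
      = 1 - t ^ (M + 1) := by
  set P : F[X] := ∏ m : Fin (M + 1), (X - C (t * z m)) with hP
  set Q : F[X] := ∏ m : Fin (M + 1), (X - C (z m)) with hQ
  have hPm : P.Monic := monic_prod_of_monic _ _ fun i _ => monic_X_sub_C _
  have hQm : Q.Monic := monic_prod_of_monic _ _ fun i _ => monic_X_sub_C _
  have hPdeg : P.natDegree = M + 1 := by
    rw [hP, natDegree_prod_of_monic _ _ fun i _ => monic_X_sub_C _]
    simp only [natDegree_X_sub_C, Finset.sum_const, smul_eq_mul, mul_one, Finset.card_univ,
      Fintype.card_fin]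
  have hQdeg : Q.natDegree = M + 1 := by
    rw [hQ, natDegree_prod_of_monic _ _ fun i _ => monic_X_sub_C _]
    simp only [natDegree_X_sub_C, Finset.sum_const, smul_eq_mul, mul_one, Finset.card_univ,
      Fintype.card_fin]
  have hdeg : (P - Q).degree < (#(Finset.univ : Finset (Fin (M + 1))) : ℕ) := by
    have hcard : #(Finset.univ : Finset (Fin (M + 1))) = M + 1 := by simp
    rw [hcard]
    rcases eq_or_ne P Q with h | h
    · rw [h, sub_self, degree_zero]
      exact WithBot.bot_lt_coe _
    have hlt := Polynomial.degree_sub_lt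
      (by rw [Polynomial.degree_eq_natDegree hPm.ne_zero,
          Polynomial.degree_eq_natDegree hQm.ne_zero, hPdeg, hQdeg])
      hPm.ne_zero (hPm.leadingCoeff.trans hQm.leadingCoeff.symm)
    rwa [Polynomial.degree_eq_natDegree hPm.ne_zero, hPdeg] at hlt
  have hvs : Set.InjOn z (Finset.univ : Finset (Fin (M + 1))) := hz.injOn
  have hev := congrArg (Polynomial.eval 0) (Lagrange.eq_interpolate hvs hdeg)
  rw [Lagrange.interpolate_apply] at hev
  simp only [eval_finset_sum, eval_mul, eval_C, eval_sub] at hev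
  have hQ0 : ∀ i, Q.eval (z i) = 0 := fun i => by
    rw [hQ, eval_prod]
    exact Finset.prod_eq_zero (Finset.mem_univ i) (by simp)
  have hPi : ∀ i, P.eval (z i)
      = (1 - t) * z i * ∏ m ∈ Finset.univ.erase i, (z i - t * z m) := by
    intro i
    rw [hP, eval_prod, ← Finset.mul_prod_erase _ _ (Finset.mem_univ i)]
    simp only [eval_sub, eval_X, eval_C]
    ring_nf
  have hbasis : ∀ i, Polynomial.eval 0 (Lagrange.basis Finset.univ z i)
      = ∏ j ∈ Finset.univ.erase i, ((z i - z j)⁻¹ * (- z j)) := by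
    intro i
    simp [Lagrange.basis, Lagrange.basisDivisor, eval_prod]
  set A : F := ∏ m : Fin (M + 1), z m with hA
  have hA0 : A ≠ 0 := Finset.prod_ne_zero_iff.mpr fun i _ => hz0 i
  set u : Fin (M + 1) → F := fun k => ∏ m ∈ Finset.univ.erase k, ((z k - t * z m) / (z k - z m))
    with hu
  have hevP0 : Polynomial.eval 0 P = (-1) ^ (M + 1) * (t ^ (M + 1) * A) := by
    rw [hP, eval_prod]
    simp only [eval_sub, eval_X, eval_C, zero_sub]
    rw [hl_prod_neg, hl_prod_cmul]
    simp [Finset.card_univ, mul_assoc, hA]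
  have hevQ0 : Polynomial.eval 0 Q = (-1) ^ (M + 1) * A := by
    rw [hQ, eval_prod]
    simp only [eval_sub, eval_X, eval_C, zero_sub]
    rw [hl_prod_neg]
    simp [Finset.card_univ, hA]
  have hterm : ∀ i,
      (P.eval (z i) - Q.eval (z i)) * Polynomial.eval 0 (Lagrange.basis Finset.univ z i)
        = (-1) ^ (M + 1) * ((t - 1) * (A * u i)) := by
    intro i
    rw [hQ0, hPi, hbasis, sub_zero]
    have hcard : #(Finset.univ.erase i) = M := by
      simp [Finset.card_erase_of_mem]
    have hAi : A = z i * ∏ m ∈ Finset.univ.erase i, z m :=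
      (Finset.mul_prod_erase _ _ (Finset.mem_univ i)).symm
    have hui : u i = (∏ m ∈ Finset.univ.erase i, (z i - t * z m))
        * (∏ m ∈ Finset.univ.erase i, (z i - z m)⁻¹) := by
      rw [hu]
      simp only [div_eq_mul_inv]
      rw [Finset.prod_mul_distrib]
    rw [Finset.prod_mul_distrib, hl_prod_neg, hcard, hui, hAi]
    ring
  rw [hevP0, hevQ0, Finset.sum_congr rfl (fun i _ => hterm i)] at hev
  simp only [← Finset.mul_sum] at hev
  refine mul_left_cancel₀ (mul_ne_zero (pow_ne_zero (M + 1) (by norm_num : (-1 : F) ≠ 0)) hA0) ?_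
  linear_combination hev

section helpers
variable {F : Type*} [CommMonoid F]

lemma hl_prod_pairs' {N : ℕ} (f : Fin N × Fin N → F) :
    ∏ p ∈ Finset.univ.filter (fun p : Fin N × Fin N => p.1 < p.2), f p
      = ∏ i : Fin N, ∏ j ∈ Finset.Ioi i, f (i, j) := by
  rw [← Finset.univ_product_univ, Finset.prod_filter, Finset.prod_product]
  refine Finset.prod_congr rfl fun i _ => ?_
  rw [← Finset.filter_lt_eq_Ioi, Finset.prod_filter]

lemma hl_prod_reindex {n : ℕ} (p : Fin (n + 1)) (g : Fin (n + 1) → F) :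
    ∏ j : Fin n, g (Equiv.swap 0 p (Fin.succ j)) = ∏ m ∈ Finset.univ.erase p, g m := by
  have himg : Finset.univ.image (fun j : Fin n => Equiv.swap 0 p (Fin.succ j))
      = Finset.univ.erase p := by
    ext m
    simp only [Finset.mem_image, Finset.mem_univ, true_and, Finset.mem_erase, and_true]
    constructor
    · rintro ⟨j, rfl⟩ h
      rw [show p = Equiv.swap 0 p 0 by simp] at h
      exact Fin.succ_ne_zero j ((Equiv.swap 0 p).injective h)
    · intro hm
      have h0 : Equiv.swap 0 p m ≠ 0 := by
        intro h
        apply hm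
        have := congrArg (Equiv.swap 0 p) h
        rwa [Equiv.swap_apply_self, Equiv.swap_apply_left] at this
      obtain ⟨j, hj⟩ := Fin.exists_succ_eq.mpr h0
      exact ⟨j, by rw [hj, Equiv.swap_apply_self]⟩
  rw [← himg, Finset.prod_image]
  intro x _ y _ hxy
  exact Fin.succ_injective _ ((Equiv.swap 0 p).injective hxy)

end helpers

lemma hl_main {F : Type*} [Field F] : ∀ (n : ℕ) (t : F), t ≠ 1 → ∀ (z : Fin n → F),
    Function.Injective z → (∀ i, z i ≠ 0) →
    ∑ σ : Equiv.Perm (Fin n),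
      ∏ p ∈ Finset.univ.filter (fun p : Fin n × Fin n => p.1 < p.2),
        (z (σ p.1) - t * z (σ p.2)) / (z (σ p.1) - z (σ p.2))
    = ∏ k ∈ Finset.range n, (1 - t ^ (k + 1)) / (1 - t) := by
  intro n
  induction n with
  | zero =>
    intro t ht z hz hz0
    simp
  | succ n ih =>
    intro t ht z hz hz0
    have ht' : (1 : F) - t ≠ 0 := sub_ne_zero.mpr (Ne.symm ht)
    set w : Fin (n + 1) → Fin n → F := fun p j => z (Equiv.swap 0 p (Fin.succ j)) with hw
    have hterm : ∀ (p : Fin (n + 1)) (e : Equiv.Perm (Fin n)),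
        (∏ q ∈ Finset.univ.filter (fun q : Fin (n+1) × Fin (n+1) => q.1 < q.2),
          (z (Equiv.Perm.decomposeFin.symm (p, e) q.1)
              - t * z (Equiv.Perm.decomposeFin.symm (p, e) q.2))
            / (z (Equiv.Perm.decomposeFin.symm (p, e) q.1)
              - z (Equiv.Perm.decomposeFin.symm (p, e) q.2)))
        = (∏ j : Fin n, ((z p - t * w p (e j)) / (z p - w p (e j))))
          * ∏ q ∈ Finset.univ.filter (fun q : Fin n × Fin n => q.1 < q.2),
              (w p (e q.1) - t * w p (e q.2)) / (w p (e q.1) - w p (e q.2)) := by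
      intro p e
      rw [hl_prod_pairs', hl_prod_pairs', Fin.prod_univ_succ]
      congr 1
      · rw [Fin.prod_Ioi_zero]
        refine Finset.prod_congr rfl fun j _ => ?_
        simp [hw]
      · refine Finset.prod_congr rfl fun i _ => ?_
        rw [Fin.prod_Ioi_succ]
        refine Finset.prod_congr rfl fun j _ => ?_
        simp [hw]
    rw [← Equiv.sum_comp (Equiv.Perm.decomposeFin.symm : _ ≃ Equiv.Perm (Fin (n+1)))]
    rw [Fintype.sum_prod_type]
    have hS : (1 - t) * ∑ p : Fin (n + 1),
        ∏ m ∈ Finset.univ.erase p, ((z p - t * z m) / (z p - z m)) = 1 - t ^ (n + 1) :=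
      hl_key t z hz hz0
    calc ∑ p : Fin (n+1), ∑ e : Equiv.Perm (Fin n),
          (∏ q ∈ Finset.univ.filter (fun q : Fin (n+1) × Fin (n+1) => q.1 < q.2),
            (z (Equiv.Perm.decomposeFin.symm (p, e) q.1)
                - t * z (Equiv.Perm.decomposeFin.symm (p, e) q.2))
              / (z (Equiv.Perm.decomposeFin.symm (p, e) q.1)
                - z (Equiv.Perm.decomposeFin.symm (p, e) q.2)))
        = ∑ p : Fin (n+1), (∏ m ∈ Finset.univ.erase p, ((z p - t * z m) / (z p - z m)))
            * ∏ k ∈ Finset.range n, (1 - t ^ (k + 1)) / (1 - t) := by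
          refine Finset.sum_congr rfl fun p _ => ?_
          rw [Finset.sum_congr rfl fun e _ => hterm p e]
          have hwinj : Function.Injective (w p) := fun a b hab =>
            Fin.succ_injective _ ((Equiv.swap 0 p).injective (hz hab))
          have hw0 : ∀ j, w p j ≠ 0 := fun j => hz0 _
          calc ∑ e : Equiv.Perm (Fin n),
                (∏ j : Fin n, ((z p - t * w p (e j)) / (z p - w p (e j))))
                  * ∏ q ∈ Finset.univ.filter (fun q : Fin n × Fin n => q.1 < q.2),
                      (w p (e q.1) - t * w p (e q.2)) / (w p (e q.1) - w p (e q.2))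
              = ∑ e : Equiv.Perm (Fin n),
                (∏ j : Fin n, ((z p - t * w p j) / (z p - w p j)))
                  * ∏ q ∈ Finset.univ.filter (fun q : Fin n × Fin n => q.1 < q.2),
                      (w p (e q.1) - t * w p (e q.2)) / (w p (e q.1) - w p (e q.2)) :=
                Finset.sum_congr rfl fun e _ => by
                  rw [Equiv.prod_comp e (fun j => (z p - t * w p j) / (z p - w p j))]
            _ = (∏ j : Fin n, ((z p - t * w p j) / (z p - w p j)))
                  * ∑ e : Equiv.Perm (Fin n),
                    ∏ q ∈ Finset.univ.filter (fun q : Fin n × Fin n => q.1 < q.2),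
                      (w p (e q.1) - t * w p (e q.2)) / (w p (e q.1) - w p (e q.2)) := by
                rw [Finset.mul_sum]
            _ = (∏ m ∈ Finset.univ.erase p, ((z p - t * z m) / (z p - z m)))
                  * ∏ k ∈ Finset.range n, (1 - t ^ (k + 1)) / (1 - t) := by
                rw [ih t ht (w p) hwinj hw0,
                  hl_prod_reindex p (fun m => (z p - t * z m) / (z p - z m))]
      _ = ∏ k ∈ Finset.range (n + 1), (1 - t ^ (k + 1)) / (1 - t) := by
          rw [← Finset.sum_mul, Finset.prod_range_succ]
          rw [show ∑ p : Fin (n + 1),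
              ∏ m ∈ Finset.univ.erase p, ((z p - t * z m) / (z p - z m))
                = (1 - t ^ (n + 1)) / (1 - t) from by
            rw [eq_div_iff ht', mul_comm]; exact hS]
          ring
/-- Hall–Littlewood identity for the empty partition:
  ∑_{σ ∈ S_n} σ(∏_{i<j} (z_i - t z_j)/(z_i - z_j)) = [n]_t!
  where [n]_t! = ∏_{k=1}^n (1-t^k)/(1-t). -/
theorem hall_littlewood_empty {K : Type*} [Field K] (n : ℕ) (t : K) (ht : t ≠ 1)
    (z : Fin n → K) (hz : Function.Injective z) :
    ∑ σ : Equiv.Perm (Fin n),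
      ∏ p ∈ Finset.univ.filter (fun p : Fin n × Fin n => p.1 < p.2),
        (z (σ p.1) - t * z (σ p.2)) / (z (σ p.1) - z (σ p.2))
    = ∏ k ∈ Finset.range n, (1 - t ^ (k + 1)) / (1 - t) := by
  classical
  set F := FractionRing (Polynomial K) with hF
  set φ : Polynomial K →+* F := (algebraMap (Polynomial K) F : _ →+* F) with hφdef
  have hφ : Function.Injective φ := IsFractionRing.injective _ _
  set g : K →+* F := φ.comp Polynomial.C with hg
  set Z : Fin n → F := fun i => φ (Polynomial.X + Polynomial.C (z i)) with hZ
  have hT : g t ≠ 1 := by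
    intro h
    have h1 : φ (Polynomial.C t) = φ (Polynomial.C 1) := by
      rw [Polynomial.C_1, map_one]; exact h
    exact ht (Polynomial.C_inj.mp (hφ h1))
  have hZinj : Function.Injective Z := by
    intro a b hab
    have := hφ hab
    exact hz (by simpa [Polynomial.C_inj] using this)
  have hZ0 : ∀ i, Z i ≠ 0 := by
    intro i h
    have : (Polynomial.X + Polynomial.C (z i)) = 0 :=
      hφ (show φ (Polynomial.X + Polynomial.C (z i)) = φ 0 by rw [map_zero]; exact h)
    exact Polynomial.X_add_C_ne_zero (z i) this
  have hmain := hl_main n (g t) hT Z hZinj hZ0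
  have hpair : ∀ a b : Fin n, a ≠ b →
      (Z a - g t * Z b) / (Z a - Z b)
        = φ ((Polynomial.X + Polynomial.C (z a)
            - Polynomial.C t * (Polynomial.X + Polynomial.C (z b)))
            * Polynomial.C ((z a - z b)⁻¹)) := by
    intro a b hab
    have hd : z a - z b ≠ 0 := sub_ne_zero.mpr fun h => hab (hz h)
    have hZab : Z a - Z b = φ (Polynomial.C (z a - z b)) := by
      rw [hZ]
      simp only [map_sub, map_add]
      ring
    have hCd : φ (Polynomial.C (z a - z b)) ≠ 0 := by
      intro h
      have := hφ (show φ (Polynomial.C (z a - z b)) = φ 0 by rw [map_zero]; exact h)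
      exact hd (Polynomial.C_eq_zero.mp this)
    have hnum : Z a - g t * Z b
        = φ (Polynomial.X + Polynomial.C (z a)
            - Polynomial.C t * (Polynomial.X + Polynomial.C (z b))) := by
      rw [hZ, hg]
      simp only [map_sub, map_mul, RingHom.comp_apply]
    rw [hZab, hnum, div_eq_iff hCd, ← map_mul]
    congr 1
    rw [mul_assoc, ← Polynomial.C_mul, inv_mul_cancel₀ hd, Polynomial.C_1, mul_one]
  have hL : (∑ σ : Equiv.Perm (Fin n),
        ∏ p ∈ Finset.univ.filter (fun p : Fin n × Fin n => p.1 < p.2),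
          (Z (σ p.1) - g t * Z (σ p.2)) / (Z (σ p.1) - Z (σ p.2)))
      = φ (∑ σ : Equiv.Perm (Fin n),
        ∏ p ∈ Finset.univ.filter (fun p : Fin n × Fin n => p.1 < p.2),
          ((Polynomial.X + Polynomial.C (z (σ p.1))
            - Polynomial.C t * (Polynomial.X + Polynomial.C (z (σ p.2))))
            * Polynomial.C ((z (σ p.1) - z (σ p.2))⁻¹))) := by
    rw [map_sum]
    refine Finset.sum_congr rfl fun σ _ => ?_
    rw [map_prod]
    refine Finset.prod_congr rfl fun q hq => ?_
    exact hpair _ _ (σ.injective.ne (ne_of_lt (Finset.mem_filter.mp hq).2))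
  have hR : (∏ k ∈ Finset.range n, (1 - (g t) ^ (k + 1)) / (1 - g t))
      = φ (Polynomial.C (∏ k ∈ Finset.range n, (1 - t ^ (k + 1)) / (1 - t))) := by
    rw [show φ (Polynomial.C (∏ k ∈ Finset.range n, (1 - t ^ (k + 1)) / (1 - t)))
        = g (∏ k ∈ Finset.range n, (1 - t ^ (k + 1)) / (1 - t)) from rfl]
    rw [map_prod]
    refine Finset.prod_congr rfl fun k _ => ?_
    rw [map_div₀, map_sub, map_sub, map_pow, map_one]
  rw [hL, hR] at hmain
  have hE := hφ hmain
  have hev := congrArg (Polynomial.eval 0) hE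
  simp only [Polynomial.eval_finset_sum, Polynomial.eval_prod, Polynomial.eval_mul,
    Polynomial.eval_sub, Polynomial.eval_add, Polynomial.eval_X, Polynomial.eval_C,
    zero_add] at hev
  simpa only [div_eq_mul_inv] using hev
end

section
/- For any partition $\lambda$, any positive integer $r$, and a parameter $t$ with $|t|<1$ (or working with formal power series in $t$), the identity $h_r(t^{\lambda-\delta}) = (-1)^r e_r(t^{-\lambda'+\delta-1})$ holds, where $h_r$ is the $r$-th complete homogeneous symmetric function evaluated at the specialization $x_i \mapsto t^{\lambda_i-i}$ ($i\ge 1$), $e_r$ is the $r$-th elementary symmetric function evaluated at $x_i \mapsto t^{-\lambda'_i+i-1}$ ($i \ge 1$), and $\lambda'$ is the conjugate (transposed) partition of $\lambda$. -/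
open Finset PowerSeries

namespace HEAux

variable {K : Type*} [Field K]

/-! ### Basic definitions -/

noncomputable def HT (t : K) (N m : ℕ) : K :=
  t ^ (-((m * (N + 1) : ℕ) : ℤ)) / ∏ l ∈ Finset.range m, (1 - t ^ (-((l : ℤ) + 1)))

noncomputable def ET (t : K) (M m : ℕ) : K :=
  t ^ (m * M + m * (m - 1) / 2) / ∏ l ∈ Finset.range m, (1 - t ^ (l + 1))

def Hp (x : ℕ → K) (s : Finset ℕ) (k : ℕ) : K :=
  ∑ m ∈ s.sym k, ((m : Sym ℕ k).1.map x).prod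

def Ep (y : ℕ → K) (s : Finset ℕ) (k : ℕ) : K :=
  ∑ T ∈ Finset.powersetCard k s, ∏ j ∈ T, y j

@[simp] lemma Hp_zero (x : ℕ → K) (s : Finset ℕ) : Hp x s 0 = 1 := by
  rw [Hp, Finset.sym_zero, Finset.sum_singleton]
  rfl

@[simp] lemma Ep_zero (y : ℕ → K) (s : Finset ℕ) : Ep y s 0 = 1 := by
  simp [Ep]

@[simp] lemma Hp_empty_succ (x : ℕ → K) (k : ℕ) : Hp x (∅ : Finset ℕ) (k + 1) = 0 := by
  simp [Hp]

@[simp] lemma Ep_empty_succ (y : ℕ → K) (k : ℕ) : Ep y (∅ : Finset ℕ) (k + 1) = 0 := by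
  rw [Ep, Finset.powersetCard_eq_empty.2 (by simp), Finset.sum_empty]

lemma Hp_congr {x x' : ℕ → K} {s : Finset ℕ} (h : ∀ i ∈ s, x i = x' i) (k : ℕ) :
    Hp x s k = Hp x' s k := by
  refine Finset.sum_congr rfl fun m hm => ?_
  congr 1
  refine Multiset.map_congr rfl fun i hi => ?_
  exact h i (Finset.mem_sym_iff.1 hm i hi)

lemma Ep_congr {y y' : ℕ → K} {s : Finset ℕ} (h : ∀ j ∈ s, y j = y' j) (k : ℕ) :
    Ep y s k = Ep y' s k := by
  refine Finset.sum_congr rfl fun T hT => Finset.prod_congr rfl fun j hj => ?_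
  exact h j ((Finset.mem_powersetCard.1 hT).1 hj)

/-! ### Insert recurrences -/

lemma sym_succ_insert {a : ℕ} {s : Finset ℕ} (ha : a ∉ s) (k : ℕ) :
    (insert a s).sym (k + 1)
      = ((insert a s).sym k).image (Sym.cons a) ∪ s.sym (k + 1) := by
  ext m
  simp only [Finset.mem_union, Finset.mem_image, Finset.mem_sym_iff]
  constructor
  · intro h
    by_cases hm : a ∈ m
    · refine Or.inl ⟨m.erase a hm, fun b hb => h b ?_, Sym.cons_erase hm⟩
      have hb' : b ∈ (m : Multiset ℕ).erase a := by
        have := Sym.coe_erase hm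
        rw [← this]
        exact hb
      exact Multiset.mem_of_mem_erase hb'
    · refine Or.inr fun b hb => ?_
      rcases Finset.mem_insert.1 (h b hb) with rfl | hb'
      · exact absurd hb hm
      · exact hb'
  · rintro (⟨m', hm', rfl⟩ | h)
    · intro b hb
      rcases Sym.mem_cons.1 hb with rfl | hb'
      · exact Finset.mem_insert_self _ _
      · exact hm' b hb'
    · exact fun b hb => Finset.mem_insert_of_mem (h b hb)

lemma Hp_insert {a : ℕ} {s : Finset ℕ} (ha : a ∉ s) (x : ℕ → K) (k : ℕ) :
    Hp x (insert a s) (k + 1) = x a * Hp x (insert a s) k + Hp x s (k + 1) := by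
  have hdisj : Disjoint (((insert a s).sym k).image (Sym.cons a)) (s.sym (k + 1)) := by
    rw [Finset.disjoint_left]
    rintro m hm hm'
    obtain ⟨m', _, rfl⟩ := Finset.mem_image.1 hm
    exact ha (Finset.mem_sym_iff.1 hm' a (Sym.mem_cons_self a m'))
  rw [Hp, sym_succ_insert ha, Finset.sum_union hdisj,
    Finset.sum_image (fun u _ v _ h => (Sym.cons_inj_right a u v).1 h)]
  have : ∀ m ∈ (insert a s).sym k,
      ((((Sym.cons a m) : Sym ℕ (k+1)) : Multiset ℕ).map x).prod
        = x a * ((m : Multiset ℕ).map x).prod := by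
    intro m _
    rw [Sym.coe_cons, Multiset.map_cons, Multiset.prod_cons]
  congr 1
  exact (Finset.sum_congr rfl this).trans (Finset.mul_sum _ _ _).symm

lemma Ep_insert {a : ℕ} {s : Finset ℕ} (ha : a ∉ s) (y : ℕ → K) (k : ℕ) :
    Ep y (insert a s) (k + 1) = Ep y s (k + 1) + y a * Ep y s k := by
  rw [Ep, Finset.powersetCard_succ_insert ha]
  have hdisj : Disjoint (Finset.powersetCard (k + 1) s)
      ((Finset.powersetCard k s).image (insert a)) := by
    rw [Finset.disjoint_right]
    rintro T hT hT'
    obtain ⟨U, hU, rfl⟩ := Finset.mem_image.1 hT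
    exact ha ((Finset.mem_powersetCard.1 hT').1 (Finset.mem_insert_self a U))
  rw [Finset.sum_union hdisj]
  congr 1
  rw [Finset.sum_image ?inj]
  case inj =>
    intro u hu v hv h
    have hu' : a ∉ u := fun hau => ha ((Finset.mem_powersetCard.1 hu).1 hau)
    have hv' : a ∉ v := fun hav => ha ((Finset.mem_powersetCard.1 hv).1 hav)
    have := congrArg (Finset.erase · a) h
    simpa [Finset.erase_insert, hu', hv'] using this
  rw [Ep, Finset.mul_sum]
  refine Finset.sum_congr rfl fun T hT => ?_
  have haT : a ∉ T := fun hh => ha ((Finset.mem_powersetCard.1 hT).1 hh)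
  rw [Finset.prod_insert haT]

/-! ### Scalar nonvanishing and recurrences -/

lemma one_sub_pow_ne {t : K} (ht : ∀ k : ℕ, 1 ≤ k → t ^ k ≠ 1) (l : ℕ) :
    (1 - t ^ (l + 1) : K) ≠ 0 :=
  sub_ne_zero.2 (Ne.symm (ht (l + 1) (Nat.le_add_left 1 l)))

lemma one_sub_zpow_ne {t : K} (ht0 : t ≠ 0) (ht : ∀ k : ℕ, 1 ≤ k → t ^ k ≠ 1) (l : ℕ) :
    (1 - t ^ (-((l : ℤ) + 1)) : K) ≠ 0 := by
  have h1 : t ^ (-((l : ℤ) + 1)) = (t ^ (l + 1) : K)⁻¹ := by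
    rw [zpow_neg, ← zpow_natCast]
    push_cast
    ring_nf
  rw [h1]
  intro h
  exact ht (l + 1) (Nat.le_add_left 1 l) (inv_eq_one.1 (sub_eq_zero.1 h).symm)

lemma prodH_ne {t : K} (ht0 : t ≠ 0) (ht : ∀ k : ℕ, 1 ≤ k → t ^ k ≠ 1) (m : ℕ) :
    (∏ l ∈ Finset.range m, (1 - t ^ (-((l : ℤ) + 1))) : K) ≠ 0 :=
  Finset.prod_ne_zero_iff.2 fun l _ => one_sub_zpow_ne ht0 ht l

lemma prodE_ne {t : K} (ht : ∀ k : ℕ, 1 ≤ k → t ^ k ≠ 1) (m : ℕ) :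
    (∏ l ∈ Finset.range m, (1 - t ^ (l + 1)) : K) ≠ 0 :=
  Finset.prod_ne_zero_iff.2 fun l _ => one_sub_pow_ne ht l

@[simp] lemma HT_zero (t : K) (N : ℕ) : HT t N 0 = 1 := by simp [HT]
@[simp] lemma ET_zero (t : K) (M : ℕ) : ET t M 0 = 1 := by simp [ET]

lemma ET_rec {t : K} (ht : ∀ k : ℕ, 1 ≤ k → t ^ k ≠ 1) (M m : ℕ) :
    ET t M (m + 1) = ET t (M + 1) (m + 1) + t ^ M * ET t (M + 1) m := by
  have hPne : (∏ l ∈ Finset.range m, (1 - t ^ (l + 1)) : K) ≠ 0 := prodE_ne ht m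
  have hEne : (1 - t ^ (m + 1) : K) ≠ 0 := one_sub_pow_ne ht m
  rw [ET, ET, ET, Finset.prod_range_succ]
  rw [show (m+1) * M + (m+1) * (m+1-1) / 2 = (m+1) * M + m * (m-1) / 2 + m by
    rw [Nat.triangle_succ]; ring]
  rw [show (m+1) * (M+1) + (m+1) * (m+1-1) / 2 = ((m+1) * M + m * (m-1) / 2 + m) + (m+1) by
    rw [Nat.triangle_succ]; ring]
  set P : K := ∏ l ∈ Finset.range m, (1 - t ^ (l + 1)) with hP
  set E : ℕ := (m+1) * M + m * (m-1) / 2 + m with hE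
  set C : ℕ := m * (M+1) + m * (m-1) / 2 with hC
  have key : (t : K) ^ E = t ^ (E + (m+1)) + (t ^ M * t ^ C) * (1 - t ^ (m+1)) := by
    have hA : (t : K) ^ (E + (m+1)) = t ^ E * t ^ (m+1) := pow_add t E (m+1)
    have hB : (t : K) ^ M * t ^ C = t ^ E := by
      rw [← pow_add]
      congr 1
      rw [hE, hC]
      ring
    rw [hA, ← hB]
    ring
  calc t ^ E / (P * (1 - t ^ (m+1)))
      = (t ^ (E + (m+1)) + (t ^ M * t ^ C) * (1 - t ^ (m+1))) / (P * (1 - t ^ (m+1))) := by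
        rw [← key]
    _ = t ^ (E + (m+1)) / (P * (1 - t ^ (m+1)))
        + ((t ^ M * t ^ C) * (1 - t ^ (m+1))) / (P * (1 - t ^ (m+1))) := add_div _ _ _
    _ = t ^ (E + (m+1)) / (P * (1 - t ^ (m+1))) + t ^ M * (t ^ C / P) := by
        rw [mul_div_mul_right _ _ hEne, mul_div_assoc]

lemma HT_rec {t : K} (ht0 : t ≠ 0) (ht : ∀ k : ℕ, 1 ≤ k → t ^ k ≠ 1) (N m : ℕ) :
    HT t N (m + 1) = HT t (N + 1) (m + 1) + t ^ (-((N : ℤ) + 1)) * HT t N m := by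
  have hPne : (∏ l ∈ Finset.range m, (1 - t ^ (-((l : ℤ) + 1))) : K) ≠ 0 := prodH_ne ht0 ht m
  have hEne : (1 - t ^ (-((m : ℤ) + 1)) : K) ≠ 0 := one_sub_zpow_ne ht0 ht m
  rw [HT, HT, HT, Finset.prod_range_succ]
  set P : K := ∏ l ∈ Finset.range m, (1 - t ^ (-((l : ℤ) + 1))) with hP
  set E : ℤ := -(((m+1) * (N+1) : ℕ) : ℤ) with hE
  have he2 : -((((m+1) * (N+1+1) : ℕ)) : ℤ) = E + (-((m : ℤ) + 1)) := by
    rw [hE]; push_cast; ring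
  have he3 : -((N : ℤ) + 1) + -(((m * (N+1) : ℕ)) : ℤ) = E := by
    rw [hE]; push_cast; ring
  rw [he2]
  have key : (t : K) ^ E = t ^ (E + (-((m : ℤ) + 1)))
      + (t ^ (-((N : ℤ) + 1)) * t ^ (-(((m * (N+1) : ℕ)) : ℤ))) * (1 - t ^ (-((m : ℤ) + 1))) := by
    have hA : (t : K) ^ (E + -((m : ℤ) + 1)) = t ^ E * t ^ (-((m : ℤ) + 1)) :=
      zpow_add₀ ht0 _ _
    have hB : (t : K) ^ (-((N : ℤ) + 1)) * t ^ (-(((m * (N+1) : ℕ)) : ℤ)) = t ^ E := by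
      rw [← zpow_add₀ ht0, he3]
    rw [hA, ← hB]
    ring
  calc t ^ E / (P * (1 - t ^ (-((m : ℤ) + 1))))
      = (t ^ (E + (-((m : ℤ) + 1)))
          + (t ^ (-((N : ℤ) + 1)) * t ^ (-(((m * (N+1) : ℕ)) : ℤ))) * (1 - t ^ (-((m : ℤ) + 1))))
          / (P * (1 - t ^ (-((m : ℤ) + 1)))) := by rw [← key]
    _ = t ^ (E + (-((m : ℤ) + 1))) / (P * (1 - t ^ (-((m : ℤ) + 1))))
        + ((t ^ (-((N : ℤ) + 1)) * t ^ (-(((m * (N+1) : ℕ)) : ℤ))) * (1 - t ^ (-((m : ℤ) + 1))))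
          / (P * (1 - t ^ (-((m : ℤ) + 1)))) := add_div _ _ _
    _ = t ^ (E + (-((m : ℤ) + 1))) / (P * (1 - t ^ (-((m : ℤ) + 1))))
        + t ^ (-((N : ℤ) + 1)) * (t ^ (-(((m * (N+1) : ℕ)) : ℤ)) / P) := by
        rw [mul_div_mul_right _ _ hEne, mul_div_assoc]

lemma HT_eq_ET_base {t : K} (ht0 : t ≠ 0) (ht : ∀ k : ℕ, 1 ≤ k → t ^ k ≠ 1) (r : ℕ) :
    HT t 0 r = (-1) ^ r * ET t 0 r := by
  induction r with
  | zero => simp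
  | succ r ih =>
    have hEne : (1 - t ^ (-((r : ℤ) + 1)) : K) ≠ 0 := one_sub_zpow_ne ht0 ht r
    have hFne : (1 - t ^ (r + 1) : K) ≠ 0 := one_sub_pow_ne ht r
    have hstepH : HT t 0 (r + 1) = HT t 0 r * (t ^ (-1 : ℤ) / (1 - t ^ (-((r : ℤ) + 1)))) := by
      rw [HT, HT, Finset.prod_range_succ]
      rw [div_mul_div_comm, ← zpow_add₀ ht0]
      congr 2
      push_cast; ring
    have hstepE : ET t 0 (r + 1) = ET t 0 r * (t ^ (r : ℕ) / (1 - t ^ (r + 1))) := by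
      rw [ET, ET, Finset.prod_range_succ]
      rw [div_mul_div_comm, ← pow_add]
      congr 2
      rw [Nat.triangle_succ]; ring
    have hratio : (t ^ (-1 : ℤ) / (1 - t ^ (-((r : ℤ) + 1))) : K)
        = -t ^ (r : ℕ) / (1 - t ^ (r + 1)) := by
      rw [div_eq_div_iff hEne hFne]
      have h1 : (t ^ (-1 : ℤ) : K) * t ^ (r + 1) = t ^ (r : ℕ) := by
        rw [← zpow_natCast t (r + 1), ← zpow_add₀ ht0,
          show (-1 : ℤ) + ((r + 1 : ℕ) : ℤ) = (r : ℤ) by push_cast; ring, zpow_natCast]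
      have h2 : (t ^ (r : ℕ) : K) * t ^ (-((r : ℤ) + 1)) = t ^ (-1 : ℤ) := by
        rw [← zpow_natCast t r, ← zpow_add₀ ht0]
        congr 1
        ring
      calc t ^ (-1 : ℤ) * (1 - t ^ (r + 1)) = t ^ (-1 : ℤ) - t ^ (-1 : ℤ) * t ^ (r + 1) := by ring
        _ = t ^ (-1 : ℤ) - t ^ (r : ℕ) := by rw [h1]
        _ = -t ^ (r : ℕ) * (1 - t ^ (-((r : ℤ) + 1))) := by
            rw [neg_mul, mul_sub, mul_one, h2]
            ring
    rw [hstepH, hstepE, ih, hratio]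
    ring

/-! ### Power series -/

noncomputable def Hs (x : ℕ → K) (s : Finset ℕ) : PowerSeries K :=
  PowerSeries.mk (Hp x s)

noncomputable def Es (y : ℕ → K) (s : Finset ℕ) : PowerSeries K :=
  PowerSeries.mk fun k => (-1) ^ k * Ep y s k

noncomputable def HTs (t : K) (N : ℕ) : PowerSeries K :=
  PowerSeries.mk (HT t N)

noncomputable def ETs (t : K) (M : ℕ) : PowerSeries K :=
  PowerSeries.mk fun m => (-1) ^ m * ET t M m

lemma coeff_mul_one_sub_succ (f : PowerSeries K) (c : K) (n : ℕ) :
    (PowerSeries.coeff (n+1)) (f * (1 - PowerSeries.C c * PowerSeries.X))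
      = PowerSeries.coeff (n+1) f - c * PowerSeries.coeff n f := by
  have : f * (1 - PowerSeries.C c * PowerSeries.X)
      = f - PowerSeries.C c * (f * PowerSeries.X) := by ring
  rw [this, map_sub, PowerSeries.coeff_C_mul, PowerSeries.coeff_succ_mul_X]

lemma coeff_mul_one_sub_zero (f : PowerSeries K) (c : K) :
    (PowerSeries.coeff 0) (f * (1 - PowerSeries.C c * PowerSeries.X))
      = PowerSeries.coeff 0 f := by
  have : f * (1 - PowerSeries.C c * PowerSeries.X)
      = f - PowerSeries.C c * (f * PowerSeries.X) := by ring
  rw [this, map_sub, PowerSeries.coeff_C_mul, PowerSeries.coeff_zero_mul_X, mul_zero, sub_zero]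

lemma one_sub_C_mul_X_ne_zero (c : K) :
    (1 - PowerSeries.C c * PowerSeries.X : PowerSeries K) ≠ 0 := by
  intro h
  have := congrArg (PowerSeries.coeff (R := K) 0) h
  rw [map_sub, PowerSeries.coeff_C_mul, PowerSeries.coeff_zero_X, mul_zero, sub_zero] at this
  simp at this

lemma Hs_insert {a : ℕ} {s : Finset ℕ} (ha : a ∉ s) (x : ℕ → K) :
    Hs x (insert a s) * (1 - PowerSeries.C (x a) * PowerSeries.X) = Hs x s := by
  ext n
  cases n with
  | zero => rw [coeff_mul_one_sub_zero, Hs, Hs, PowerSeries.coeff_mk, PowerSeries.coeff_mk,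
      Hp_zero, Hp_zero]
  | succ n =>
    rw [coeff_mul_one_sub_succ, Hs, Hs, PowerSeries.coeff_mk, PowerSeries.coeff_mk,
      PowerSeries.coeff_mk, Hp_insert ha]
    ring

lemma Es_insert {a : ℕ} {s : Finset ℕ} (ha : a ∉ s) (y : ℕ → K) :
    Es y (insert a s) = Es y s * (1 - PowerSeries.C (y a) * PowerSeries.X) := by
  ext n
  cases n with
  | zero => rw [coeff_mul_one_sub_zero, Es, Es, PowerSeries.coeff_mk, PowerSeries.coeff_mk,
      Ep_zero, Ep_zero]
  | succ n =>
    rw [coeff_mul_one_sub_succ, Es, Es, PowerSeries.coeff_mk, PowerSeries.coeff_mk,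
      PowerSeries.coeff_mk, Ep_insert ha]
    ring

lemma HTs_rec {t : K} (ht0 : t ≠ 0) (ht : ∀ k : ℕ, 1 ≤ k → t ^ k ≠ 1) (N : ℕ) :
    HTs t N * (1 - PowerSeries.C (t ^ (-((N : ℤ) + 1))) * PowerSeries.X) = HTs t (N + 1) := by
  ext n
  cases n with
  | zero => rw [coeff_mul_one_sub_zero, HTs, HTs, PowerSeries.coeff_mk, PowerSeries.coeff_mk,
      HT_zero, HT_zero]
  | succ n =>
    rw [coeff_mul_one_sub_succ, HTs, HTs, PowerSeries.coeff_mk, PowerSeries.coeff_mk,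
      PowerSeries.coeff_mk, HT_rec ht0 ht N n]
    ring

lemma ETs_rec {t : K} (ht : ∀ k : ℕ, 1 ≤ k → t ^ k ≠ 1) (M : ℕ) :
    ETs t M = ETs t (M + 1) * (1 - PowerSeries.C (t ^ M) * PowerSeries.X) := by
  ext n
  cases n with
  | zero => rw [coeff_mul_one_sub_zero, ETs, ETs, PowerSeries.coeff_mk, PowerSeries.coeff_mk,
      ET_zero, ET_zero]
  | succ n =>
    rw [coeff_mul_one_sub_succ, ETs, ETs, PowerSeries.coeff_mk, PowerSeries.coeff_mk,
      PowerSeries.coeff_mk, ET_rec ht M n]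
    ring

lemma Hs_empty (x : ℕ → K) : Hs x (∅ : Finset ℕ) = 1 := by
  ext n
  cases n with
  | zero => rw [Hs, PowerSeries.coeff_mk, Hp_zero, PowerSeries.coeff_one]; simp
  | succ n => rw [Hs, PowerSeries.coeff_mk, Hp_empty_succ, PowerSeries.coeff_one]; simp

lemma Es_empty (y : ℕ → K) : Es y (∅ : Finset ℕ) = 1 := by
  ext n
  cases n with
  | zero => rw [Es, PowerSeries.coeff_mk, Ep_zero, PowerSeries.coeff_one]; simp
  | succ n => rw [Es, PowerSeries.coeff_mk, Ep_empty_succ, PowerSeries.coeff_one]; simp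

lemma Hs_congr {x x' : ℕ → K} {s : Finset ℕ} (h : ∀ i ∈ s, x i = x' i) :
    Hs x s = Hs x' s := by
  ext n
  rw [Hs, Hs, PowerSeries.coeff_mk, PowerSeries.coeff_mk, Hp_congr h]

lemma Es_congr {y y' : ℕ → K} {s : Finset ℕ} (h : ∀ j ∈ s, y j = y' j) :
    Es y s = Es y' s := by
  ext n
  rw [Es, Es, PowerSeries.coeff_mk, PowerSeries.coeff_mk, Ep_congr h]

/-! ### Cutoff shifting -/

lemma L_shift {t : K} (ht0 : t ≠ 0) (ht : ∀ k : ℕ, 1 ≤ k → t ^ k ≠ 1) {x : ℕ → K} {N0 : ℕ}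
    (hx : ∀ i, N0 ≤ i → x i = t ^ (-((i : ℤ) + 1))) :
    ∀ N, N0 ≤ N → Hs x (Finset.range N) * HTs t N = Hs x (Finset.range N0) * HTs t N0 := by
  refine Nat.le_induction rfl fun N hN ih => ?_
  have h1 : Hs x (Finset.range (N+1)) * (1 - PowerSeries.C (x N) * PowerSeries.X)
      = Hs x (Finset.range N) := by
    rw [Finset.range_add_one]
    exact Hs_insert Finset.notMem_range_self x
  calc Hs x (Finset.range (N+1)) * HTs t (N+1)
      = Hs x (Finset.range (N+1))
        * (HTs t N * (1 - PowerSeries.C (t ^ (-((N : ℤ) + 1))) * PowerSeries.X)) := by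
        rw [HTs_rec ht0 ht N]
    _ = (Hs x (Finset.range (N+1)) * (1 - PowerSeries.C (x N) * PowerSeries.X)) * HTs t N := by
        rw [hx N hN]
        ring
    _ = Hs x (Finset.range N) * HTs t N := by rw [h1]
    _ = _ := ih

lemma D_shift {t : K} (ht : ∀ k : ℕ, 1 ≤ k → t ^ k ≠ 1) {y : ℕ → K} {M0 : ℕ}
    (hy : ∀ j, M0 ≤ j → y j = t ^ j) :
    ∀ M, M0 ≤ M → Es y (Finset.range M) * ETs t M = Es y (Finset.range M0) * ETs t M0 := by
  refine Nat.le_induction rfl fun M hM ih => ?_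
  have h1 : Es y (Finset.range (M+1))
      = Es y (Finset.range M) * (1 - PowerSeries.C (y M) * PowerSeries.X) := by
    rw [Finset.range_add_one]
    exact Es_insert Finset.notMem_range_self y
  calc Es y (Finset.range (M+1)) * ETs t (M+1)
      = (Es y (Finset.range M) * (1 - PowerSeries.C (y M) * PowerSeries.X)) * ETs t (M+1) := by
        rw [h1]
    _ = Es y (Finset.range M)
        * (ETs t (M+1) * (1 - PowerSeries.C (t ^ M) * PowerSeries.X)) := by
        rw [hy M hM]
        ring
    _ = Es y (Finset.range M) * ETs t M := by rw [← ETs_rec ht M]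
    _ = _ := ih

end HEAux

namespace HEAux

variable {K : Type*} [Field K]

lemma main {t : K} (ht0 : t ≠ 0) (ht : ∀ k : ℕ, 1 ≤ k → t ^ k ≠ 1) :
    ∀ (n : ℕ) (f μ : ℕ → ℕ) (N M : ℕ), Antitone f → (∀ i j : ℕ, j < f i ↔ i < μ j) →
      (∀ i, N ≤ i → f i = 0) → (∀ j, M ≤ j → μ j = 0) → (∑ i ∈ Finset.range N, f i = n) →
      Hs (fun i => t ^ ((f i : ℤ) - (i + 1))) (Finset.range N) * HTs t N
        = Es (fun j => t ^ ((j : ℤ) - (μ j : ℤ))) (Finset.range M) * ETs t M := by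
  intro n
  induction n using Nat.strong_induction_on with
  | _ n IH =>
    intro f μ N M hf hconj hN hM hsum
    by_cases hz : ∀ i, f i = 0
    · -- base case: empty partition
      have hμz : ∀ j, μ j = 0 := by
        intro j
        by_contra hj
        have h1 : 0 < μ j := Nat.pos_of_ne_zero hj
        have h2 := (hconj 0 j).2 h1
        rw [hz 0] at h2
        omega
      have hx : ∀ i, (0:ℕ) ≤ i → (fun i => t ^ ((f i : ℤ) - (i + 1))) i = t ^ (-((i : ℤ) + 1)) := by
        intro i _
        show t ^ ((f i : ℤ) - ((i : ℤ) + 1)) = t ^ (-((i : ℤ) + 1))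
        rw [hz i]
        congr 1 <;> omega
      have hy : ∀ j, (0:ℕ) ≤ j → (fun j : ℕ => t ^ ((j : ℤ) - (μ j : ℤ))) j = t ^ j := by
        intro j _
        simp only [hμz j, Nat.cast_zero, sub_zero, zpow_natCast]
      rw [L_shift ht0 ht hx N (Nat.zero_le N), D_shift ht hy M (Nat.zero_le M)]
      rw [Finset.range_zero, Hs_empty, Es_empty, one_mul, one_mul]
      ext r
      rw [HTs, ETs, PowerSeries.coeff_mk, PowerSeries.coeff_mk]
      exact HT_eq_ET_base ht0 ht r
    · -- inductive step: remove a box from the last nonzero row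
      push_neg at hz
      have hex : ∃ i0, f i0 ≠ 0 ∧ ∀ i, i0 < i → f i = 0 := by
        obtain ⟨iw, hiw⟩ := hz
        have hiwN : iw < N := by
          by_contra h
          exact hiw (hN iw (le_of_not_gt h))
        refine ⟨Nat.findGreatest (fun i => f i ≠ 0) N,
          Nat.findGreatest_spec (P := fun i => f i ≠ 0) (le_of_lt hiwN) hiw, ?_⟩
        intro i hi
        by_cases hiN : i ≤ N
        · by_contra h
          exact (Nat.findGreatest_is_greatest (P := fun i => f i ≠ 0) hi hiN) h
        · exact hN i (by omega)
      obtain ⟨i0, hfi0, hgt⟩ := hex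
      have hi0N : i0 < N := by
        by_contra h
        exact hfi0 (hN i0 (le_of_not_gt h))
      obtain ⟨j0, hj0⟩ : ∃ j0, j0 + 1 = f i0 := ⟨f i0 - 1, by omega⟩
      have hmuj0 : μ j0 = i0 + 1 := by
        have h1 : i0 < μ j0 := (hconj i0 j0).1 (by omega)
        have h2 : ¬ (i0 + 1 < μ j0) := by
          intro h
          have h3 := (hconj (i0 + 1) j0).2 h
          rw [hgt (i0 + 1) (by omega)] at h3
          omega
        omega
      have hj0M : j0 < M := by
        by_contra h
        rw [hM j0 (le_of_not_gt h)] at hmuj0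
        omega
      set f' : ℕ → ℕ := Function.update f i0 j0 with hf'def
      set μ' : ℕ → ℕ := Function.update μ j0 i0 with hμ'def
      have hf'i0 : f' i0 = j0 := Function.update_self i0 j0 f
      have hf'ne : ∀ i, i ≠ i0 → f' i = f i := fun i hi => Function.update_of_ne hi _ f
      have hμ'j0 : μ' j0 = i0 := Function.update_self j0 i0 μ
      have hμ'ne : ∀ j, j ≠ j0 → μ' j = μ j := fun j hj => Function.update_of_ne hj _ μ
      -- hypotheses for f', μ'
      have hf' : Antitone f' := by
        refine antitone_nat_of_succ_le fun i => ?_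
        rcases eq_or_ne i i0 with h2 | h2
        · rw [h2, hf'ne (i0+1) (by omega), hf'i0, hgt (i0+1) (by omega)]
          omega
        · rcases eq_or_ne (i+1) i0 with h1 | h1
          · rw [h1, hf'i0, hf'ne i h2]
            have h3 : f i0 ≤ f i := h1 ▸ hf (Nat.le_succ i)
            omega
          · rw [hf'ne (i+1) h1, hf'ne i h2]
            exact hf (Nat.le_succ i)
      have hconj' : ∀ i j : ℕ, j < f' i ↔ i < μ' j := by
        intro i j
        rcases eq_or_ne i i0 with h2 | h2
        · rcases eq_or_ne j j0 with h3 | h3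
          · rw [h2, h3, hf'i0, hμ'j0]
            omega
          · rw [h2, hf'i0, hμ'ne j h3]
            constructor
            · intro h
              exact (hconj i0 j).1 (by omega)
            · intro h
              have h4 := (hconj i0 j).2 h
              omega
        · rcases eq_or_ne j j0 with h3 | h3
          · rw [h3, hf'ne i h2, hμ'j0]
            constructor
            · intro h
              have hfi : f i ≠ 0 := by omega
              have h4 : ¬ (i0 < i) := fun hlt => hfi (hgt i hlt)
              omega
            · intro h
              have h4 := hf (le_of_lt h)
              omega
          · rw [hf'ne i h2, hμ'ne j h3]
            exact hconj i j
      have hN' : ∀ i, N ≤ i → f' i = 0 := fun i hi =>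
        (hf'ne i (by omega)).trans (hN i hi)
      have hM' : ∀ j, M ≤ j → μ' j = 0 := fun j hj =>
        (hμ'ne j (by omega)).trans (hM j hj)
      have hsum' : ∑ i ∈ Finset.range N, f' i = n - 1 := by
        have hmem : i0 ∈ Finset.range N := Finset.mem_range.2 hi0N
        have h1 : f' i0 + ∑ i ∈ (Finset.range N).erase i0, f' i
            = ∑ i ∈ Finset.range N, f' i := Finset.add_sum_erase _ _ hmem
        have h2 : f i0 + ∑ i ∈ (Finset.range N).erase i0, f i
            = ∑ i ∈ Finset.range N, f i := Finset.add_sum_erase _ _ hmem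
        have h3 : ∑ i ∈ (Finset.range N).erase i0, f' i
            = ∑ i ∈ (Finset.range N).erase i0, f i :=
          Finset.sum_congr rfl fun i hi => hf'ne i (Finset.ne_of_mem_erase hi)
        rw [hf'i0, h3] at h1
        omega
      have hn1 : n - 1 < n := by
        have h0 : 0 < n := by
          rw [← hsum]
          have hmem : i0 ∈ Finset.range N := Finset.mem_range.2 hi0N
          calc 0 < f i0 := Nat.pos_of_ne_zero hfi0
            _ ≤ ∑ i ∈ Finset.range N, f i :=
              Finset.single_le_sum (fun _ _ => Nat.zero_le _) hmem
        omega
      have IH' := IH (n - 1) hn1 f' μ' N M hf' hconj' hN' hM' hsum'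
      -- abbreviations
      set x : ℕ → K := fun i => t ^ ((f i : ℤ) - (i + 1)) with hxdef
      set x' : ℕ → K := fun i => t ^ ((f' i : ℤ) - (i + 1)) with hx'def
      set y : ℕ → K := fun j => t ^ ((j : ℤ) - (μ j : ℤ)) with hydef
      set y' : ℕ → K := fun j => t ^ ((j : ℤ) - (μ' j : ℤ)) with hy'def
      set a : K := t ^ ((j0 : ℤ) - ((i0 : ℤ) + 1)) with hadef
      set b : K := t ^ ((j0 : ℤ) - (i0 : ℤ)) with hbdef
      have hxi0 : x i0 = b := by
        show t ^ ((f i0 : ℤ) - ((i0 : ℤ) + 1)) = t ^ ((j0 : ℤ) - (i0 : ℤ))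
        congr 1
        omega
      have hx'i0 : x' i0 = a := by
        show t ^ ((f' i0 : ℤ) - ((i0 : ℤ) + 1)) = t ^ ((j0 : ℤ) - ((i0 : ℤ) + 1))
        rw [hf'i0]
      have hyj0 : y j0 = a := by
        show t ^ ((j0 : ℤ) - ((μ j0 : ℕ) : ℤ)) = t ^ ((j0 : ℤ) - ((i0 : ℤ) + 1))
        rw [hmuj0]
        congr 1 <;> omega
      have hy'j0 : y' j0 = b := by
        show t ^ ((j0 : ℤ) - ((μ' j0 : ℕ) : ℤ)) = t ^ ((j0 : ℤ) - (i0 : ℤ))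
        rw [hμ'j0]
      -- shifts to cutoff i0+1
      have hxs : ∀ i, i0 + 1 ≤ i → x i = t ^ (-((i : ℤ) + 1)) := by
        intro i hi
        show t ^ ((f i : ℤ) - ((i : ℤ) + 1)) = t ^ (-((i : ℤ) + 1))
        rw [hgt i (by omega)]
        congr 1 <;> omega
      have hx's : ∀ i, i0 + 1 ≤ i → x' i = t ^ (-((i : ℤ) + 1)) := by
        intro i hi
        show t ^ ((f' i : ℤ) - ((i : ℤ) + 1)) = t ^ (-((i : ℤ) + 1))
        rw [hf'ne i (by omega), hgt i (by omega)]
        congr 1 <;> omega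
      have step1 : Hs x (Finset.range N) * HTs t N
          = Hs x (Finset.range (i0 + 1)) * HTs t (i0 + 1) :=
        L_shift ht0 ht hxs N (by omega)
      have step2 : Hs x' (Finset.range N) * HTs t N
          = Hs x' (Finset.range (i0 + 1)) * HTs t (i0 + 1) :=
        L_shift ht0 ht hx's N (by omega)
      -- insert decompositions, h-side
      have hHxb : Hs x (Finset.range (i0 + 1)) * (1 - PowerSeries.C b * PowerSeries.X)
          = Hs x (Finset.range i0) := by
        rw [← hxi0, Finset.range_add_one]
        exact Hs_insert Finset.notMem_range_self x
      have hHxa : Hs x' (Finset.range (i0 + 1)) * (1 - PowerSeries.C a * PowerSeries.X)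
          = Hs x' (Finset.range i0) := by
        rw [← hx'i0, Finset.range_add_one]
        exact Hs_insert Finset.notMem_range_self x'
      have hHeq : Hs x (Finset.range i0) = Hs x' (Finset.range i0) := by
        refine Hs_congr fun i hi => ?_
        show t ^ ((f i : ℤ) - ((i : ℤ) + 1)) = t ^ ((f' i : ℤ) - ((i : ℤ) + 1))
        rw [hf'ne i (by rw [Finset.mem_range] at hi; omega)]
      -- e-side
      have hj0mem : j0 ∈ Finset.range M := Finset.mem_range.2 hj0M
      have hins : insert j0 ((Finset.range M).erase j0) = Finset.range M :=
        Finset.insert_erase hj0mem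
      have hEya : Es y (Finset.range M)
          = Es y ((Finset.range M).erase j0) * (1 - PowerSeries.C a * PowerSeries.X) := by
        have h0 := Es_insert (Finset.notMem_erase j0 (Finset.range M)) y
        rw [hins, hyj0] at h0
        exact h0
      have hEyb : Es y' (Finset.range M)
          = Es y ((Finset.range M).erase j0) * (1 - PowerSeries.C b * PowerSeries.X) := by
        have h0 := Es_insert (Finset.notMem_erase j0 (Finset.range M)) y'
        rw [hins, hy'j0] at h0
        have h1 : Es y' ((Finset.range M).erase j0) = Es y ((Finset.range M).erase j0) := by
          refine Es_congr fun j hj => ?_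
          show t ^ ((j : ℤ) - ((μ' j : ℕ) : ℤ)) = t ^ ((j : ℤ) - ((μ j : ℕ) : ℤ))
          rw [hμ'ne j (Finset.ne_of_mem_erase hj)]
        rw [h1] at h0
        exact h0
      -- combine
      apply mul_right_cancel₀ (one_sub_C_mul_X_ne_zero b)
      calc (Hs x (Finset.range N) * HTs t N) * (1 - PowerSeries.C b * PowerSeries.X)
          = (Hs x (Finset.range (i0+1)) * (1 - PowerSeries.C b * PowerSeries.X))
            * HTs t (i0+1) := by rw [step1]; ring
        _ = Hs x' (Finset.range i0) * HTs t (i0+1) := by rw [hHxb, hHeq]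
        _ = (Hs x' (Finset.range (i0+1)) * (1 - PowerSeries.C a * PowerSeries.X))
            * HTs t (i0+1) := by rw [hHxa]
        _ = (Hs x' (Finset.range N) * HTs t N) * (1 - PowerSeries.C a * PowerSeries.X) := by
            rw [step2]; ring
        _ = (Es y' (Finset.range M) * ETs t M) * (1 - PowerSeries.C a * PowerSeries.X) := by
            rw [IH']
        _ = ((Es y ((Finset.range M).erase j0) * (1 - PowerSeries.C a * PowerSeries.X))
            * ETs t M) * (1 - PowerSeries.C b * PowerSeries.X) := by
            rw [hEyb]; ring
        _ = (Es y (Finset.range M) * ETs t M) * (1 - PowerSeries.C b * PowerSeries.X) := by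
            rw [hEya]

end HEAux

/-- `h_r(t^{λ-δ}) = (-1)^r e_r(t^{-λ'+δ-1})`.

Here the partition `λ` is encoded (0-indexed) by an antitone, eventually-zero function
`f : ℕ → ℕ` (`f i = λ_{i+1}`), and its conjugate `λ'` by `μ` (`μ j = λ'_{j+1}`),
characterized by `j < f i ↔ i < μ j`.

The specializations `x_i ↦ t^{λ_i - i}` (resp. `x_i ↦ t^{-λ'_i + i - 1}`) have
infinite geometric tails; the (analytically convergent) values `h_r(t^{λ-δ})` and
`e_r(t^{-λ'+δ-1})` are rational functions of `t`, expressed exactly by splitting off a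
cutoff `N ≥ ℓ(λ)` (resp. `M ≥ λ_1`) and summing the geometric tails in closed form:
`h_j` of the tail `t^{-(N+1)}, t^{-(N+2)}, …` is `t^{-j(N+1)}/∏_{l=1}^j(1-t^{-l})`, and
`e_j` of the tail `t^{M}, t^{M+1}, …` is `t^{jM + j(j-1)/2}/∏_{l=1}^j(1-t^{l})`. -/
theorem h_eq_neg_pow_e {K : Type*} [Field K] (t : K) (ht0 : t ≠ 0)
    (ht : ∀ k : ℕ, 1 ≤ k → t ^ k ≠ 1)
    (f μ : ℕ → ℕ) (hf : Antitone f) (hconj : ∀ i j : ℕ, j < f i ↔ i < μ j)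
    (N M : ℕ) (hN : ∀ i, N ≤ i → f i = 0) (hM : ∀ j, M ≤ j → μ j = 0)
    (r : ℕ) (hr : 1 ≤ r) :
    (∑ k ∈ Finset.range (r + 1),
        (∑ m ∈ (Finset.range N).sym k,
            ((m : Sym ℕ k).1.map (fun i => t ^ ((f i : ℤ) - (i + 1)))).prod) *
          (t ^ (-(((r - k) * (N + 1) : ℕ) : ℤ)) /
            ∏ l ∈ Finset.range (r - k), (1 - t ^ (-((l : ℤ) + 1)))))
    = (-1) ^ r *
      ∑ k ∈ Finset.range (r + 1),
        (∑ T ∈ Finset.powersetCard k (Finset.range M),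
            ∏ j ∈ T, t ^ ((j : ℤ) - (μ j : ℤ))) *
          (t ^ ((r - k) * M + (r - k) * (r - k - 1) / 2) /
            ∏ l ∈ Finset.range (r - k), (1 - t ^ (l + 1))) := by
  classical
  set x : ℕ → K := fun i => t ^ ((f i : ℤ) - (i + 1)) with hxdef
  set y : ℕ → K := fun j => t ^ ((j : ℤ) - (μ j : ℤ)) with hydef
  have hmain := HEAux.main ht0 ht (∑ i ∈ Finset.range N, f i) f μ N M hf hconj hN hM rfl
  have hL := congrArg (PowerSeries.coeff r) hmain
  rw [HEAux.Hs, HEAux.HTs, HEAux.Es, HEAux.ETs, PowerSeries.coeff_mul,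
    PowerSeries.coeff_mul] at hL
  simp only [PowerSeries.coeff_mk] at hL
  rw [Finset.Nat.sum_antidiagonal_eq_sum_range_succ_mk,
    Finset.Nat.sum_antidiagonal_eq_sum_range_succ_mk] at hL
  have hsign : ∀ k ∈ Finset.range (r + 1),
      ((-1 : K) ^ k * HEAux.Ep y (Finset.range M) k)
        * ((-1) ^ (r - k) * HEAux.ET t M (r - k))
      = (-1) ^ r * (HEAux.Ep y (Finset.range M) k * HEAux.ET t M (r - k)) := by
    intro k hk
    have hkr : k ≤ r := Nat.lt_succ_iff.1 (Finset.mem_range.1 hk)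
    have hpow : (-1 : K) ^ k * (-1) ^ (r - k) = (-1) ^ r := by
      rw [← pow_add]
      congr 1
      omega
    calc ((-1 : K) ^ k * HEAux.Ep y (Finset.range M) k)
        * ((-1) ^ (r - k) * HEAux.ET t M (r - k))
        = ((-1 : K) ^ k * (-1) ^ (r - k))
          * (HEAux.Ep y (Finset.range M) k * HEAux.ET t M (r - k)) := by ring
      _ = (-1) ^ r * (HEAux.Ep y (Finset.range M) k * HEAux.ET t M (r - k)) := by rw [hpow]
  rw [Finset.sum_congr rfl hsign, ← Finset.mul_sum] at hL
  simpa only [HEAux.Hp, HEAux.HT, HEAux.Ep, HEAux.ET] using hL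
end
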